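/- If a rim-hook h corresponding to cell (i,j) of λ inserts into a reverse plane partition π, then for every k ∈ ℤ the k-th trace satisfies tr_k(h * π) = tr_k(π) + 1 if j - λ'_j ≤ k ≤ λ_i - i, and tr_k(h * π) = tr_k(π) otherwise. In particular |h * π| = |π| + h(i,j). -/

import Mathlib

abbrev Cell := ℕ × ℕ

def nC (u : Cell) : Cell := (u.1 - 1, u.2)
def eC (u : Cell) : Cell := (u.1, u.2 + 1)
def sC (u : Cell) : Cell := (u.1 + 1, u.2)
def wC (u : Cell) : Cell := (u.1, u.2 - 1)
def seC (u : Cell) : Cell := (u.1 + 1, u.2 + 1)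

/-- `lam i` is the `i`-th part (1-indexed); weakly decreasing with finitely many nonzero parts. -/
def IsPartition (lam : ℕ → ℕ) : Prop :=
  (∀ i, lam (i + 1) ≤ lam i) ∧ (∃ N, ∀ i, N ≤ i → lam i = 0)

/-- The Young diagram of `lam`: cells `(i,j)` with `1 ≤ i`, `1 ≤ j ≤ lam i`. -/
def cells (lam : ℕ → ℕ) : Set Cell := {u | 1 ≤ u.1 ∧ 1 ≤ u.2 ∧ u.2 ≤ lam u.1}

/-- The conjugate partition. -/
noncomputable def conj (lam : ℕ → ℕ) (j : ℕ) : ℕ := {i | 1 ≤ i ∧ j ≤ lam i}.ncard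

def content (u : Cell) : ℤ := (u.2 : ℤ) - (u.1 : ℤ)

/-- Hook length of the cell `u = (i,j)`: `lam i + lam' j - i - j + 1`. -/
noncomputable def hookLen (lam : ℕ → ℕ) (u : Cell) : ℕ := lam u.1 + conj lam u.2 - u.1 - u.2 + 1

/-- A North-East path in `lam`. -/
def IsNEPath (lam : ℕ → ℕ) (P : List Cell) : Prop :=
  P ≠ [] ∧ (∀ u ∈ P, u ∈ cells lam) ∧ List.Chain' (fun u v => v = nC u ∨ v = eC u) P

/-- Head of a path. -/
def hd (P : List Cell) : Cell := P.headD (0, 0)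
/-- Tail (last cell) of a path. -/
def lst (P : List Cell) : Cell := P.getLastD (0, 0)
/-- Length of a path (number of steps). -/
def len (P : List Cell) : ℕ := P.length - 1

/-- A rim-hook of `lam`. -/
def IsRimHook (lam : ℕ → ℕ) (h : List Cell) : Prop :=
  IsNEPath lam h ∧ sC (hd h) ∉ cells lam ∧ eC (lst h) ∉ cells lam ∧
    ∀ u ∈ h, seC u ∉ cells lam

def IsOuterCorner (lam : ℕ → ℕ) (u : Cell) : Prop :=
  u ∈ cells lam ∧ eC u ∉ cells lam ∧ sC u ∉ cells lam

def IsInnerCorner (lam : ℕ → ℕ) (u : Cell) : Prop :=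
  u ∈ cells lam ∧ eC u ∈ cells lam ∧ sC u ∈ cells lam ∧ seC u ∉ cells lam

def IsCornerContent (lam : ℕ → ℕ) (z : ℤ) : Prop :=
  ∃ v, (IsInnerCorner lam v ∨ IsOuterCorner lam v) ∧ content v = z

/-- Cells whose content is the content of an inner corner. -/
def regionI (lam : ℕ → ℕ) : Set Cell :=
  {u ∈ cells lam | ∃ v, IsInnerCorner lam v ∧ content v = content u}

/-- Cells whose content is the content of an outer corner. -/
def regionO (lam : ℕ → ℕ) : Set Cell :=
  {u ∈ cells lam | ∃ v, IsOuterCorner lam v ∧ content v = content u}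

/-- Cells with `c(u) < o_1` or `i_k < c(u) < o_{k+1}`: the content is not a corner content
and the largest corner content below it (if any) is an inner-corner content. -/
def regionA (lam : ℕ → ℕ) : Set Cell :=
  {u ∈ cells lam | ¬ IsCornerContent lam (content u) ∧
    ∀ w, IsOuterCorner lam w → content w < content u →
      ∃ v, IsInnerCorner lam v ∧ content w < content v ∧ content v < content u}

/-- Cells with `o_k < c(u) < i_k` or `o_{r+1} < c(u)`: the remaining cells. -/
def regionB (lam : ℕ → ℕ) : Set Cell :=
  cells lam \ (regionI lam ∪ regionO lam ∪ regionA lam)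

/-- A reverse plane partition of shape `lam`, as a function vanishing outside `lam`
which is weakly increasing along rows and columns. -/
def IsRPP (lam : ℕ → ℕ) (π : Cell → ℕ) : Prop :=
  (∀ u, u ∉ cells lam → π u = 0) ∧
  (∀ u ∈ cells lam, eC u ∈ cells lam → π u ≤ π (eC u)) ∧
  (∀ u ∈ cells lam, sC u ∈ cells lam → π u ≤ π (sC u))

/-- `π + P`: increase by one along the path. -/
def addPath (π : Cell → ℕ) (P : List Cell) : Cell → ℕ :=
  fun u => if u ∈ P then π u + 1 else π u

/-- `π - P`: decrease by one along the path. -/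
def subPath (π : Cell → ℕ) (P : List Cell) : Cell → ℕ :=
  fun u => if u ∈ P then π u - 1 else π u

/-- The path `P` is `π`-compatible. -/
def Compatible (lam : ℕ → ℕ) (π : Cell → ℕ) (P : List Cell) : Prop :=
  (∀ u ∈ P, u ∈ regionI lam ∪ regionA lam → eC u ∈ P ∧ π (eC u) = π u) ∧
  (∀ u ∈ P, nC u ∈ P → π (nC u) = π u)

/-- `P` witnesses the insertion of the rim-hook `h` into `π`. -/
def InsertPath (lam : ℕ → ℕ) (π : Cell → ℕ) (h P : List Cell) : Prop :=
  IsNEPath lam P ∧ Compatible lam π P ∧ lst P = lst h ∧ len P = len h ∧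
    IsRPP lam (addPath π P)

/-- The rim-hook `h` inserts into `π`. -/
def Inserts (lam : ℕ → ℕ) (h : List Cell) (π : Cell → ℕ) : Prop :=
  ∃ P, InsertPath lam π h P

open Classical in
/-- `h * π`, the insertion of `h` into `π` (equal to `π` if `h` does not insert). -/
noncomputable def insertRH (lam : ℕ → ℕ) (h : List Cell) (π : Cell → ℕ) : Cell → ℕ :=
  if hP : Inserts lam h π then addPath π hP.choose else π

/-- `h₁ * h₂ * ⋯ * h_s * 0`. -/
noncomputable def insertList (lam : ℕ → ℕ) (hs : List (List Cell)) : Cell → ℕ :=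
  hs.foldr (insertRH lam) (fun _ => 0)

/-- Reverse lexicographic order on rim-hooks. -/
def RHle (f h : List Cell) : Prop :=
  content (hd h) < content (hd f) ∨
    (content (hd f) = content (hd h) ∧ content (lst f) ≤ content (lst h))

/-- Reverse lexicographic order on cells. -/
def revlexLE (u v : Cell) : Prop := v.2 < u.2 ∨ (u.2 = v.2 ∧ v.1 ≤ u.1)

/-- Content order on cells: `u ⊴ v`. -/
def contentLE (u v : Cell) : Prop :=
  content v < content u ∨ (content u = content v ∧ v.1 ≤ u.1)

/-- The set of candidates of `π`. -/
def candidates (lam : ℕ → ℕ) (π : Cell → ℕ) : Set Cell :=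
  {u ∈ regionO lam | π (wC u) < π u} ∪
    {u ∈ regionA lam | π (wC u) < π u ∧ π (nC u) < π u}

/-- One step of the path `Q(π,u)`. -/
def QStep (lam : ℕ → ℕ) (π : Cell → ℕ) (v v' : Cell) : Prop :=
  (v ∈ regionO lam ∪ regionB lam ∧ π (nC v) = π v ∧ v' = nC v) ∨
  ((v ∈ regionI lam ∪ regionA lam ∨ (π (nC v) < π v ∧ eC v ∈ cells lam)) ∧ v' = eC v)

/-- `P` is the path `Q(π,u)`: starts at `u`, follows the `Q`-steps, and terminates
when `π(n v) < π(v)` and `e v ∉ lam`. -/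
def IsQPath (lam : ℕ → ℕ) (π : Cell → ℕ) (u : Cell) (P : List Cell) : Prop :=
  P ≠ [] ∧ (∀ v ∈ P, v ∈ cells lam) ∧ hd P = u ∧ List.Chain' (QStep lam π) P ∧
    π (nC (lst P)) < π (lst P) ∧ eC (lst P) ∉ cells lam


section Aux

lemma content_step (lam : ℕ → ℕ) {a b : Cell} (hb : b ∈ cells lam)
    (hstep : b = nC a ∨ b = eC a) : content b = content a + 1 := by
  obtain ⟨h1, h2, h3⟩ := hb
  rcases hstep with h | h <;> subst h <;>
    simp only [nC, eC, content] at * <;> omega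

lemma aux_range_map (c : ℤ) (n : ℕ) :
    c :: (List.range n).map (fun i : ℕ => (c + 1) + (i : ℤ)) =
      (List.range (n + 1)).map (fun i : ℕ => c + (i : ℤ)) := by
  rw [List.range_succ_eq_map, List.map_cons, List.map_map]
  refine congrArg₂ _ (by simp) ?_
  apply List.map_congr_left
  intro i _
  simp only [Function.comp_apply, Nat.succ_eq_add_one]
  push_cast
  ring

lemma map_content_eq (lam : ℕ → ℕ) :
    ∀ (Q : List Cell), (∀ v ∈ Q, v ∈ cells lam) →
      List.Chain' (fun u v => v = nC u ∨ v = eC u) Q →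
      Q.map content = (List.range Q.length).map
        (fun i : ℕ => content (hd Q) + (i : ℤ))
  | [], _, _ => by simp
  | [a], _, _ => by simp [hd, List.range_succ]
  | a :: b :: t, hcells, hchain => by
    have hstep : b = nC a ∨ b = eC a := hchain.rel_head
    have hcb : content b = content a + 1 :=
      content_step lam (hcells b (by simp)) hstep
    have ih := map_content_eq lam (b :: t)
      (fun v hv => hcells v (List.mem_cons_of_mem _ hv)) hchain.tail
    simp only [List.map_cons, List.length_cons] at ih ⊢
    rw [ih]
    have hhd1 : hd (a :: b :: t) = a := by simp [hd]
    have hhd2 : hd (b :: t) = b := by simp [hd]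
    rw [hhd1, hhd2, hcb]
    exact aux_range_map (content a) (t.length + 1)

lemma content_lst_eq (lam : ℕ → ℕ) (Q : List Cell) (hne : Q ≠ [])
    (hcells : ∀ v ∈ Q, v ∈ cells lam)
    (hchain : List.Chain' (fun u v => v = nC u ∨ v = eC u) Q) :
    content (lst Q) = content (hd Q) + (Q.length : ℤ) - 1 := by
  induction Q with
  | nil => simp at hne
  | cons a t ih =>
    cases t with
    | nil => simp [hd, lst]
    | cons b t' =>
      have hstep : b = nC a ∨ b = eC a := hchain.rel_head
      have hcb : content b = content a + 1 :=
        content_step lam (hcells b (by simp)) hstep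
      have := ih (by simp) (fun v hv => hcells v (List.mem_cons_of_mem _ hv))
        hchain.tail
      have hlst : lst (a :: b :: t') = lst (b :: t') := by simp [lst]
      have hhd1 : hd (a :: b :: t') = a := by simp [hd]
      have hhd2 : hd (b :: t') = b := by simp [hd]
      rw [hlst, this, hhd1, hhd2, hcb]
      simp only [List.length_cons]
      push_cast
      ring

lemma nodup_of_path (lam : ℕ → ℕ) (Q : List Cell)
    (hcells : ∀ v ∈ Q, v ∈ cells lam)
    (hchain : List.Chain' (fun u v => v = nC u ∨ v = eC u) Q) : Q.Nodup := by
  apply List.Nodup.of_map content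
  rw [map_content_eq lam Q hcells hchain]
  exact List.Nodup.map (fun i j hij => by omega) List.nodup_range

lemma countP_content (lam : ℕ → ℕ) (Q : List Cell) (hne : Q ≠ [])
    (hcells : ∀ v ∈ Q, v ∈ cells lam)
    (hchain : List.Chain' (fun u v => v = nC u ∨ v = eC u) Q) (k : ℤ) :
    Q.countP (fun v => content v = k) =
      if content (hd Q) ≤ k ∧ k ≤ content (hd Q) + (Q.length : ℤ) - 1 then 1
        else 0 := by
  have h1 : Q.countP (fun v => content v = k)
      = (Q.map content).countP (fun z => z = k) := by
    rw [List.countP_map]; rfl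
  rw [h1, map_content_eq lam Q hcells hchain, List.countP_map]
  have h2 : ((fun z => decide (z = k)) ∘ (fun i : ℕ => content (hd Q) + (i : ℤ)))
      = fun i : ℕ => decide (content (hd Q) + (i : ℤ) = k) := rfl
  rw [h2]
  have hlen : 1 ≤ Q.length := by
    cases Q with
    | nil => simp at hne
    | cons a t => simp
  by_cases hk : content (hd Q) ≤ k ∧ k ≤ content (hd Q) + (Q.length : ℤ) - 1
  · rw [if_pos hk]
    obtain ⟨i, hi, hik⟩ : ∃ i : ℕ, i < Q.length ∧ content (hd Q) + (i : ℤ) = k :=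
      ⟨(k - content (hd Q)).toNat, by omega, by omega⟩
    have heq : ∀ j : ℕ, (content (hd Q) + (j : ℤ) = k) ↔ j = i := by
      intro j; omega
    simp only [heq]
    have h3 : (fun j : ℕ => decide (j = i)) = (· == i) := by
      funext j
      by_cases hji : j = i <;> simp [hji]
    rw [h3, ← List.count]
    exact List.count_eq_one_of_mem List.nodup_range (List.mem_range.mpr hi)
  · rw [if_neg hk]
    rw [List.countP_eq_length_filter, List.length_eq_zero_iff]
    apply List.filter_eq_nil_iff.mpr
    intro i hi
    simp only [List.mem_range] at hi
    simp only [decide_eq_true_eq]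
    omega

lemma cells_finite (lam : ℕ → ℕ) (hlam : IsPartition lam) :
    (cells lam).Finite := by
  obtain ⟨N, hN⟩ := hlam.2
  have hmono : ∀ i, lam i ≤ lam 0 := by
    intro i
    induction i with
    | zero => exact le_refl _
    | succ n ih => exact le_trans (hlam.1 n) ih
  apply Set.Finite.subset ((Set.finite_Icc 0 N).prod (Set.finite_Icc 0 (lam 0)))
  rintro ⟨i, j⟩ ⟨h1, h2, h3⟩
  have h3' : j ≤ lam i := h3
  constructor
  · simp only [Set.mem_Icc]
    refine ⟨Nat.zero_le _, ?_⟩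
    by_contra hc
    have := hN i (by omega)
    omega
  · simp only [Set.mem_Icc]
    exact ⟨Nat.zero_le _, le_trans h3' (hmono i)⟩

end Aux

/-- Inserting the rim-hook corresponding to `(i,j)` increases the `k`-th trace by one
exactly for `j - lam'_j ≤ k ≤ lam_i - i`, and increases the size by the hook-length. -/
theorem trace_insert (lam : ℕ → ℕ) (hlam : IsPartition lam)
    (π : Cell → ℕ) (hπ : IsRPP lam π) (u : Cell) (hu : u ∈ cells lam)
    (h : List Cell) (hh : IsRimHook lam h)
    (hhd : hd h = (conj lam u.2, u.2)) (hlst : lst h = (u.1, lam u.1))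
    (P : List Cell) (hP : InsertPath lam π h P) :
    (∀ k : ℤ, ∑ᶠ v ∈ {v ∈ cells lam | content v = k}, addPath π P v =
      (∑ᶠ v ∈ {v ∈ cells lam | content v = k}, π v) +
        (if (u.2 : ℤ) - (conj lam u.2 : ℤ) ≤ k ∧ k ≤ (lam u.1 : ℤ) - (u.1 : ℤ)
          then 1 else 0)) ∧
    (∑ᶠ v ∈ cells lam, addPath π P v) = (∑ᶠ v ∈ cells lam, π v) + hookLen lam u := by
  obtain ⟨hNE, hcompat, hlstPh, hlenPh, hrpp⟩ := hP
  obtain ⟨hPne, hPcells, hPchain⟩ := hNE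
  obtain ⟨⟨hhne, hhcells, hhchain⟩, _, _, _⟩ := hh
  have hfin : (cells lam).Finite := cells_finite lam hlam
  have hchP : content (lst P) = content (hd P) + (P.length : ℤ) - 1 :=
    content_lst_eq lam P hPne hPcells hPchain
  have hchh : content (lst h) = content (hd h) + (h.length : ℤ) - 1 :=
    content_lst_eq lam h hhne hhcells hhchain
  have hPlen1 : 1 ≤ P.length := by
    cases P with
    | nil => simp at hPne
    | cons a t => simp
  have hhlen1 : 1 ≤ h.length := by
    cases h with
    | nil => simp at hhne
    | cons a t => simp
  have hleneq : P.length = h.length := by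
    have := hlenPh
    simp only [len] at this
    omega
  have hclst : content (lst P) = (lam u.1 : ℤ) - (u.1 : ℤ) := by
    rw [hlstPh, hlst]; simp [content]
  have hchd : content (hd P) = (u.2 : ℤ) - (conj lam u.2 : ℤ) := by
    have h1 : content (hd h) = (u.2 : ℤ) - (conj lam u.2 : ℤ) := by
      rw [hhd]; simp [content]
    have h2 : content (lst P) = content (lst h) := by rw [hlstPh]
    omega
  have hPnodup : P.Nodup := nodup_of_path lam P hPcells hPchain
  have hcount : ∀ k : ℤ, P.countP (fun v => content v = k) =
      if (u.2 : ℤ) - (conj lam u.2 : ℤ) ≤ k ∧ k ≤ (lam u.1 : ℤ) - (u.1 : ℤ)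
        then 1 else 0 := by
    intro k
    rw [countP_content lam P hPne hPcells hPchain k]
    congr 1
    simp only [eq_iff_iff]
    constructor <;> intro hk <;> constructor <;> omega
  have key : ∀ (S : Set Cell) (hS : S.Finite),
      (∑ᶠ v ∈ S, addPath π P v) = (∑ᶠ v ∈ S, π v) +
        (hS.toFinset.filter (· ∈ P)).card := by
    intro S hS
    have e : ∀ f : Cell → ℕ, ∑ᶠ v ∈ S, f v = ∑ v ∈ hS.toFinset, f v := by
      intro f
      rw [← finsum_mem_coe_finset, Set.Finite.coe_toFinset]
    rw [e, e]
    have hcong : ∀ v ∈ hS.toFinset,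
        addPath π P v = π v + (if v ∈ P then 1 else 0) := by
      intro v _
      simp only [addPath]
      split <;> omega
    rw [Finset.sum_congr rfl hcong, Finset.sum_add_distrib]
    congr 1
    simpa using Finset.sum_boole (· ∈ P) hS.toFinset
  constructor
  · intro k
    set S : Set Cell := {v ∈ cells lam | content v = k} with hSdef
    have hSsub : S ⊆ cells lam := fun v hv => hv.1
    have hS : S.Finite := hfin.subset hSsub
    rw [key S hS]
    congr 1
    have hfeq : (hS.toFinset.filter (· ∈ P)) =
        (P.filter (fun v => content v = k)).toFinset := by
      rw [List.toFinset_filter]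
      ext v
      simp only [Finset.mem_filter, Set.Finite.mem_toFinset, List.mem_toFinset,
        hSdef, Set.mem_setOf_eq, decide_eq_true_eq]
      constructor
      · rintro ⟨⟨_, hc⟩, hvP⟩; exact ⟨hvP, hc⟩
      · rintro ⟨hvP, hc⟩; exact ⟨⟨hPcells v hvP, hc⟩, hvP⟩
    rw [hfeq, List.toFinset_card_of_nodup (hPnodup.filter _),
      ← List.countP_eq_length_filter, hcount k]
  · rw [key (cells lam) hfin]
    congr 1
    have hfeq : (hfin.toFinset.filter (· ∈ P)) = P.toFinset := by
      ext v
      simp only [Finset.mem_filter, Set.Finite.mem_toFinset, List.mem_toFinset]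
      exact ⟨fun hv => hv.2, fun hv => ⟨hPcells v hv, hv⟩⟩
    rw [hfeq, List.toFinset_card_of_nodup hPnodup]
    obtain ⟨hu1, hu2, hu3⟩ := hu
    rw [hclst, hchd] at hchP
    simp only [hookLen]
    omega
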